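/- Let G be a finite abelian group with |G| ≥ 2. Then BO(|G|−1, G) = |G|−1 if the 2-rank of G equals 1, and BO(|G|−1, G) = |G|+1 otherwise. -/

import Mathlib

/-- A finset `S` of an abelian group is `k`-barycentric if it has `k` elements
and the sum of its elements equals `k • g` for some `g ∈ S`. -/
def IsBarycentric {G : Type*} [AddCommGroup G] (k : ℕ) (S : Finset G) : Prop :=
  S.card = k ∧ ∃ g ∈ S, ∑ x ∈ S, x = k • g

/-- The `k`-th barycentric Olson constant: the smallest `ℓ` such that every subset
of `G` with at least `ℓ` elements contains a `k`-barycentric subset. -/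
noncomputable def BO (k : ℕ) (G : Type*) [AddCommGroup G] [Fintype G] : ℕ :=
  sInf {ℓ : ℕ | ∀ A : Finset G, ℓ ≤ A.card → ∃ B ⊆ A, IsBarycentric k B}

/-- The 2-rank of a finite abelian group `G`: the number of invariant factors of `G`
divisible by 2, equivalently `log₂` of the number of solutions of `2 • g = 0`. -/
noncomputable def twoRank (G : Type*) [AddCommGroup G] : ℕ :=
  Nat.log 2 (Nat.card {g : G // 2 • g = 0})

open Finset

set_option linter.unusedSectionVars false

private lemma sum_closed_eq_zero {G : Type*} [AddCommGroup G] {a b : G}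
    (ha2 : a + a = 0) (hb2 : b + b = 0) (ha : a ≠ 0) (hb : b ≠ 0) (hab : a ≠ b) :
    ∀ S : Finset G, (∀ x ∈ S, x + x = 0) → (∀ x ∈ S, x + a ∈ S) → (∀ x ∈ S, x + b ∈ S) →
      ∑ x ∈ S, x = 0 := by
  classical
  have hna : -a = a := neg_eq_of_add_eq_zero_right ha2
  have hnb : -b = b := neg_eq_of_add_eq_zero_right hb2
  have hab0 : a + b ≠ 0 := fun h => hab (by rw [← hnb]; exact eq_neg_of_add_eq_zero_left h)
  intro S
  induction S using Finset.strongInduction with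
  | H S ih =>
    intro h0 hca hcb
    obtain rfl | ⟨x, hx⟩ := S.eq_empty_or_nonempty
    · simp
    set T : Finset G := {x, x + a, x + b, x + a + b} with hT
    have hmemT : ∀ y, y ∈ T ↔ y = x ∨ y = x + a ∨ y = x + b ∨ y = x + a + b := by
      intro y; simp [hT]
    have hTS : T ⊆ S := by
      intro y hy
      rcases (hmemT y).mp hy with rfl | rfl | rfl | rfl
      · exact hx
      · exact hca x hx
      · exact hcb x hx
      · exact hcb (x + a) (hca x hx)
    have hkeya : ∀ y, y + a ∈ T → y ∈ T := by
      intro y hy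
      rw [hmemT] at hy ⊢
      rcases hy with h | h | h | h
      · refine Or.inr (Or.inl ?_)
        have : y = x - a := eq_sub_of_add_eq h
        rw [this, sub_eq_add_neg, hna]
      · exact Or.inl (by exact add_right_cancel h)
      · refine Or.inr (Or.inr (Or.inr ?_))
        have : y = x + b - a := eq_sub_of_add_eq h
        rw [this, sub_eq_add_neg, hna]; abel
      · refine Or.inr (Or.inr (Or.inl ?_))
        have : y = x + a + b - a := eq_sub_of_add_eq h
        rw [this, sub_eq_add_neg, hna]
        have : x + a + b + a = x + b + (a + a) := by abel
        rw [this, ha2, add_zero]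
    have hkeyb : ∀ y, y + b ∈ T → y ∈ T := by
      intro y hy
      rw [hmemT] at hy ⊢
      rcases hy with h | h | h | h
      · refine Or.inr (Or.inr (Or.inl ?_))
        have : y = x - b := eq_sub_of_add_eq h
        rw [this, sub_eq_add_neg, hnb]
      · refine Or.inr (Or.inr (Or.inr ?_))
        have : y = x + a - b := eq_sub_of_add_eq h
        rw [this, sub_eq_add_neg, hnb]
      · exact Or.inl (by exact add_right_cancel h)
      · refine Or.inr (Or.inl ?_)
        have : y = x + a + b - b := eq_sub_of_add_eq h
        rw [this, sub_eq_add_neg, hnb]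
        have : x + a + b + b = x + a + (b + b) := by abel
        rw [this, hb2, add_zero]
    have hssub : S \ T ⊂ S := by
      refine Finset.sdiff_ssubset hTS ⟨x, ?_⟩
      rw [hmemT]; exact Or.inl rfl
    have hrest : ∑ y ∈ S \ T, y = 0 := by
      refine ih (S \ T) hssub (fun y hy => h0 y (Finset.mem_sdiff.mp hy).1) ?_ ?_
      · intro y hy
        rw [Finset.mem_sdiff] at hy ⊢
        exact ⟨hca y hy.1, fun h => hy.2 (hkeya y h)⟩
      · intro y hy
        rw [Finset.mem_sdiff] at hy ⊢
        exact ⟨hcb y hy.1, fun h => hy.2 (hkeyb y h)⟩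
    have hx2 : x + x = 0 := h0 x hx
    have hd1 : x ≠ x + a := fun h => ha (by rwa [left_eq_add] at h)
    have hd2 : x ≠ x + b := fun h => hb (by rwa [left_eq_add] at h)
    have hd3 : x ≠ x + a + b := fun h => hab0 (by rwa [add_assoc, left_eq_add] at h)
    have hd4 : x + a ≠ x + b := fun h => hab (by rwa [add_right_inj] at h)
    have hd5 : x + a ≠ x + a + b := fun h => hb (by rwa [left_eq_add] at h)
    have hd6 : x + b ≠ x + a + b := fun h => ha (by
      rw [show x + a + b = x + b + a by abel] at h
      rwa [left_eq_add] at h)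
    have hsumT : ∑ y ∈ T, y = 0 := by
      rw [hT]
      rw [Finset.sum_insert (by simp [hd1, hd2, hd3]),
        Finset.sum_insert (by simp [hd4, hd5]),
        Finset.sum_insert (by simp [hd6]), Finset.sum_singleton]
      have : x + (x + a + (x + b + (x + a + b))) = (x + x) + (x + x) + ((a + a) + (b + b)) := by
        abel
      rw [this, hx2, ha2, hb2]; simp
    rw [← Finset.sum_sdiff hTS, hrest, hsumT, add_zero]

private lemma sigma_dichotomy(G : Type*) [AddCommGroup G] [Fintype G] :
    (twoRank G = 1 ∧ ∑ x : G, x ≠ 0) ∨ (twoRank G ≠ 1 ∧ ∑ x : G, x = 0) := by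
  classical
  set H : Finset G := univ.filter (fun x => x + x = 0) with hHdef
  have hmemH : ∀ x : G, x ∈ H ↔ x + x = 0 := by intro x; simp [hHdef]
  have h0H : (0 : G) ∈ H := (hmemH 0).mpr (by simp)
  have hrank : twoRank G = Nat.log 2 H.card := by
    unfold twoRank
    congr 1
    rw [Nat.card_eq_fintype_card, Fintype.card_subtype]
    congr 1
    ext x
    simp [hHdef, two_nsmul]
  have hsigma : ∑ x : G, x = ∑ x ∈ H, x := by
    rw [← Finset.sum_filter_add_sum_filter_not univ (fun x => x + x = 0), ← hHdef]
    have : ∑ x ∈ univ.filter (fun x : G => ¬(x + x = 0)), x = 0 := by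
      refine Finset.sum_involution (f := id) (fun x _ => -x) (by simp) ?_ ?_ (by simp)
      · intro y hy _
        simp only [mem_filter, mem_univ, true_and] at hy
        intro h
        exact hy (by nth_rewrite 1 [← h]; rw [neg_add_cancel])
      · intro y hy
        simp only [mem_filter, mem_univ, true_and] at hy ⊢
        intro h
        exact hy (by
          have : y + y = -((-y) + (-y)) := by abel
          rw [this, h, neg_zero])
    rw [this, add_zero]
  have hHpos : 0 < H.card := Finset.card_pos.mpr ⟨0, h0H⟩
  rcases Nat.lt_or_ge H.card 2 with h1 | h2
  · -- card = 1
    have hc : H.card = 1 := by omega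
    obtain ⟨e, he⟩ := Finset.card_eq_one.mp hc
    have he0 : e = 0 := by
      have := h0H; rw [he, Finset.mem_singleton] at this; exact this.symm
    refine Or.inr ⟨?_, ?_⟩
    · rw [hrank, hc]; simp
    · rw [hsigma, he, Finset.sum_singleton, he0]
  rcases Nat.lt_or_ge H.card 3 with h3 | h4
  · -- card = 2
    have hc : H.card = 2 := by omega
    obtain ⟨u, v, huv, he⟩ := Finset.card_eq_two.mp hc
    refine Or.inl ⟨?_, ?_⟩
    · rw [hrank, hc, Nat.log_eq_one_iff']; omega
    · rw [hsigma, he]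
      rcases (by rw [he, Finset.mem_insert, Finset.mem_singleton] at h0H; exact h0H :
          (0 : G) = u ∨ (0 : G) = v) with h | h
      · rw [Finset.sum_pair huv, ← h, zero_add]
        exact fun hv => huv (by rw [← h, hv])
      · rw [Finset.sum_pair huv, ← h, add_zero]
        exact fun hu => huv (by rw [← h, hu])
  · -- card ≥ 3
    obtain ⟨a, haH⟩ := Finset.card_pos.mp (show 0 < (H.erase 0).card by
      rw [Finset.card_erase_of_mem h0H]; omega)
    have ha0 : a ≠ 0 := Finset.ne_of_mem_erase haH
    have haH' : a ∈ H := Finset.mem_of_mem_erase haH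
    obtain ⟨b, hbH⟩ := Finset.card_pos.mp (show 0 < ((H.erase 0).erase a).card by
      rw [Finset.card_erase_of_mem haH, Finset.card_erase_of_mem h0H]; omega)
    have hba : b ≠ a := Finset.ne_of_mem_erase hbH
    have hb0 : b ≠ 0 := Finset.ne_of_mem_erase (Finset.mem_of_mem_erase hbH)
    have hbH' : b ∈ H := Finset.mem_of_mem_erase (Finset.mem_of_mem_erase hbH)
    have ha2 : a + a = 0 := (hmemH a).mp haH'
    have hb2 : b + b = 0 := (hmemH b).mp hbH'
    have hab : a ≠ b := hba.symm
    have hab0 : a + b ≠ 0 := fun h => hab (by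
      rw [← neg_eq_of_add_eq_zero_right hb2]; exact eq_neg_of_add_eq_zero_left h)
    have habH : a + b ∈ H := (hmemH _).mpr (by
      rw [show a + b + (a + b) = (a + a) + (b + b) by abel, ha2, hb2, add_zero])
    refine Or.inr ⟨?_, ?_⟩
    · -- card ≥ 4, so log ≥ 2
      have hsub : ({0, a, b, a + b} : Finset G) ⊆ H := by
        intro y hy
        simp only [Finset.mem_insert, Finset.mem_singleton] at hy
        rcases hy with rfl | rfl | rfl | rfl
        · exact h0H
        · exact haH'
        · exact hbH'
        · exact habH
      have hc4 : ({0, a, b, a + b} : Finset G).card = 4 := by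
        rw [Finset.card_insert_of_notMem (by simp [Ne.symm ha0, Ne.symm hb0, Ne.symm hab0]),
          Finset.card_insert_of_notMem (by
            simp only [Finset.mem_insert, Finset.mem_singleton]
            push_neg
            exact ⟨hab, fun h => hb0 (by rwa [left_eq_add] at h)⟩),
          Finset.card_insert_of_notMem (by
            simp only [Finset.mem_singleton]
            intro h
            exact ha0 (by
              rw [show a + b = b + a by abel] at h
              rwa [left_eq_add] at h)),
          Finset.card_singleton]
      have h4 : 4 ≤ H.card := hc4 ▸ Finset.card_le_card hsub
      rw [hrank]
      have : 2 ≤ Nat.log 2 H.card := by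
        rw [Nat.le_log_iff_pow_le (by norm_num) (by omega)]; omega
      omega
    · rw [hsigma]
      exact sum_closed_eq_zero ha2 hb2 ha0 hb0 hab H
        (fun x hx => (hmemH x).mp hx)
        (fun x hx => (hmemH _).mpr (by
          rw [show x + a + (x + a) = (x + x) + (a + a) by abel, (hmemH x).mp hx, ha2, add_zero]))
        (fun x hx => (hmemH _).mpr (by
          rw [show x + b + (x + b) = (x + x) + (b + b) by abel, (hmemH x).mp hx, hb2, add_zero]))

section bary
variable {G : Type*} [AddCommGroup G] [Fintype G] [DecidableEq G]

private lemma nsmul_pred (g : G) (h : 1 ≤ Fintype.card G) :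
    (Fintype.card G - 1) • g = -g := by
  have h3 : (Fintype.card G - 1) • g + g = Fintype.card G • g := by
    rw [← succ_nsmul, Nat.sub_add_cancel h]
  rw [card_nsmul_eq_zero] at h3
  exact eq_neg_of_add_eq_zero_left h3

private lemma compl_card_one {B : Finset G} (hG : 2 ≤ Fintype.card G)
    (hB : B.card = Fintype.card G - 1) : ∃ a : G, Bᶜ = {a} ∧ ∑ x ∈ B, x = (∑ x : G, x) - a := by
  have hc : Bᶜ.card = 1 := by
    rw [Finset.card_compl, hB]; omega
  obtain ⟨a, ha⟩ := Finset.card_eq_one.mp hc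
  refine ⟨a, ha, ?_⟩
  have h1 := Finset.sum_compl_add_sum B (fun x : G => x)
  rw [ha, Finset.sum_singleton] at h1
  rw [eq_sub_iff_add_eq, add_comm]
  exact h1

private lemma exists_bary (hG : 2 ≤ Fintype.card G) (hσ : ∑ x : G, x ≠ 0) :
    ∀ A : Finset G, Fintype.card G - 1 ≤ A.card →
      ∃ B ⊆ A, IsBarycentric (Fintype.card G - 1) B := by
  intro A hA
  obtain ⟨B, hBA, hB⟩ := Finset.exists_subset_card_eq hA
  obtain ⟨a, ha, hsum⟩ := compl_card_one hG hB
  refine ⟨B, hBA, hB, a - ∑ x : G, x, ?_, ?_⟩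
  · have : a - ∑ x : G, x ∉ Bᶜ := by
      rw [ha, Finset.mem_singleton]
      intro h
      exact hσ (by rwa [sub_eq_self] at h)
    simpa using this
  · rw [hsum, nsmul_pred _ (by omega), neg_sub]

private lemma no_bary (hG : 2 ≤ Fintype.card G) (hσ : ∑ x : G, x = 0)
    (B : Finset G) : ¬ IsBarycentric (Fintype.card G - 1) B := by
  rintro ⟨hB, g, hg, hsum⟩
  obtain ⟨a, ha, hs⟩ := compl_card_one hG hB
  rw [hs, hσ, zero_sub, nsmul_pred _ (by omega)] at hsum
  have : a = g := neg_injective hsum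
  have : g ∈ Bᶜ := by rw [ha, Finset.mem_singleton, this]
  exact (Finset.mem_compl.mp this) hg

end bary

theorem BO_card_sub_one (G : Type*) [AddCommGroup G] [Fintype G]
    (hG : 2 ≤ Fintype.card G) :
    BO (Fintype.card G - 1) G =
      if twoRank G = 1 then Fintype.card G - 1 else Fintype.card G + 1 := by
  classical
  rcases sigma_dichotomy G with ⟨hr, hσ⟩ | ⟨hr, hσ⟩
  · rw [if_pos hr]
    refine le_antisymm (Nat.sInf_le (exists_bary hG hσ)) ?_
    refine le_csInf ⟨Fintype.card G - 1, exists_bary hG hσ⟩ ?_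
    intro m hm
    by_contra hlt
    push_neg at hlt
    obtain ⟨A, _, hA⟩ := Finset.exists_subset_card_eq
      (show Fintype.card G - 2 ≤ (univ : Finset G).card by rw [Finset.card_univ]; omega)
    obtain ⟨B, hBA, hB, -⟩ := hm A (by omega)
    have := Finset.card_le_card hBA
    omega
  · rw [if_neg hr]
    have hmem : (Fintype.card G + 1) ∈
        {ℓ : ℕ | ∀ A : Finset G, ℓ ≤ A.card → ∃ B ⊆ A, IsBarycentric (Fintype.card G - 1) B} := by
      intro A hA
      have := Finset.card_le_univ A
      exact absurd hA (by omega)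
    refine le_antisymm (Nat.sInf_le hmem) ?_
    refine le_csInf ⟨_, hmem⟩ ?_
    intro m hm
    by_contra hlt
    push_neg at hlt
    obtain ⟨B, -, hB⟩ := hm univ (by rw [Finset.card_univ]; omega)
    exact no_bary hG hσ B hB
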